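/- Let A be row-stochastic with w* = v_left(A*) for a row-stochastic matrix A* sharing the support of A, where (A*)ᵀw* = w*. Along the ASAP dynamics with donor-controlled work flow (ẇ = −w + Aᵀw, Ȧ = A diag(p(w)) − diag(Ap(w))A), the function V(A,w) = −∑ᵢ ( ∫_{w*ᵢ}^{wᵢ} p_i(x)dx + w*ᵢ ∑_{k:(i,k)∈E} a*_{ik} ln(a_{ik}/a*_{ik}) ) has Lie derivative V̇(A,w) = p(w)ᵀ(Iₙ − Aᵀ)(w − w*). -/

import Mathlib

/-- Lie derivative of the performance-entropy function along the ASAP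
dynamics with donor-controlled work flow:
V̇(A,w) = p(w)ᵀ(Iₙ − Aᵀ)(w − w*). -/
theorem stmt_15 (n : ℕ) (p : Fin n → ℝ → ℝ)
    (hp : ∀ i, Continuous (p i))
    (Astar : Matrix (Fin n) (Fin n) ℝ) (wstar : Fin n → ℝ)
    (hAs_nonneg : ∀ i j, 0 ≤ Astar i j)
    (hAs_row : ∀ i, ∑ j, Astar i j = 1)
    (hws_pos : ∀ i, 0 < wstar i) (hws_sum : ∑ i, wstar i = 1)
    (heig : ∀ i, ∑ k, Astar k i * wstar k = wstar i)
    (A : ℝ → Matrix (Fin n) (Fin n) ℝ) (w : ℝ → Fin n → ℝ)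
    (hrow : ∀ t i, ∑ j, A t i j = 1)
    (hsupp : ∀ t i j, 0 < A t i j ↔ 0 < Astar i j)
    (hzero : ∀ t i j, A t i j = 0 ↔ Astar i j = 0)
    (hwderiv : ∀ t i, HasDerivAt (fun s => w s i)
      (-(w t i) + ∑ k, A t k i * w t k) t)
    (hAderiv : ∀ t i j, HasDerivAt (fun s => A s i j)
      (A t i j * (p j (w t j) - ∑ k, A t i k * p k (w t k))) t)
    (V : ℝ → ℝ)
    (hV : ∀ t, V t = -∑ i, ((∫ x in (wstar i)..(w t i), p i x) +
      wstar i * ∑ k, Astar i k * Real.log (A t i k / Astar i k))) :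
    ∀ t, HasDerivAt V
      (∑ i, p i (w t i) *
        ((w t i - wstar i) - ∑ k, A t k i * (w t k - wstar k))) t := by
  intro t
  have hVfun : V = fun s => -∑ i, ((∫ x in (wstar i)..(w s i), p i x) +
      wstar i * ∑ k, Astar i k * Real.log (A s i k / Astar i k)) := funext hV
  rw [hVfun]
  -- derivative of each integral part
  have hInt : ∀ i, HasDerivAt (fun s => ∫ x in (wstar i)..(w s i), p i x)
      (p i (w t i) * (-(w t i) + ∑ k, A t k i * w t k)) t := by
    intro i
    have h1 : HasDerivAt (fun y => ∫ x in (wstar i)..y, p i x) (p i (w t i)) (w t i) :=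
      ((hp i).integral_hasStrictDerivAt (wstar i) (w t i)).hasDerivAt
    exact h1.comp t (hwderiv t i)
  -- derivative of each log part
  have hLog : ∀ i k, HasDerivAt (fun s => Astar i k * Real.log (A s i k / Astar i k))
      (Astar i k * (p k (w t k) - ∑ l, A t i l * p l (w t l))) t := by
    intro i k
    rcases eq_or_lt_of_le (hAs_nonneg i k) with h0 | hpos
    · have : (fun s => Astar i k * Real.log (A s i k / Astar i k)) = fun _ => 0 := by
        funext s; rw [← h0, zero_mul]
      rw [this, ← h0, zero_mul]
      exact hasDerivAt_const t 0
    · have hApos : ∀ s, 0 < A s i k := fun s => (hsupp s i k).mpr hpos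
      have heq : (fun s => Astar i k * Real.log (A s i k / Astar i k)) =
          fun s => Astar i k * (Real.log (A s i k) - Real.log (Astar i k)) := by
        funext s; rw [Real.log_div (hApos s).ne' hpos.ne']
      rw [heq]
      have hd := ((hAderiv t i k).log (hApos t).ne').sub_const (Real.log (Astar i k))
      have h2 := hd.const_mul (Astar i k)
      have hne : A t i k ≠ 0 := (hApos t).ne'
      refine h2.congr_deriv ?_
      rw [mul_div_cancel_left₀ _ hne]
  have hsum : HasDerivAt (fun s => -∑ i, ((∫ x in (wstar i)..(w s i), p i x) +
      wstar i * ∑ k, Astar i k * Real.log (A s i k / Astar i k)))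
      (-∑ i, (p i (w t i) * (-(w t i) + ∑ k, A t k i * w t k) +
        wstar i * ∑ k, Astar i k * (p k (w t k) - ∑ l, A t i l * p l (w t l)))) t := by
    apply HasDerivAt.neg
    apply HasDerivAt.fun_sum
    intro i _
    exact (hInt i).add (((HasDerivAt.fun_sum (fun k _ => hLog i k)).const_mul (wstar i)))
  convert hsum using 1
  -- algebra
  have key1 : ∀ i, ∑ k, Astar i k * (p k (w t k) - ∑ l, A t i l * p l (w t l)) =
      (∑ k, Astar i k * p k (w t k)) - ∑ l, A t i l * p l (w t l) := by
    intro i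
    simp only [mul_sub]
    rw [Finset.sum_sub_distrib, ← Finset.sum_mul, hAs_row i, one_mul]
  simp only [key1]
  have e1 : ∑ i, wstar i * ((∑ k, Astar i k * p k (w t k)) - ∑ l, A t i l * p l (w t l)) =
      (∑ i, ∑ k, wstar i * (Astar i k * p k (w t k))) -
        ∑ i, ∑ l, wstar i * (A t i l * p l (w t l)) := by
    simp only [mul_sub, Finset.mul_sum, Finset.sum_sub_distrib]
  have e2 : (∑ i, ∑ k, wstar i * (Astar i k * p k (w t k))) = ∑ k, wstar k * p k (w t k) := by
    rw [Finset.sum_comm]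
    congr 1; funext k
    rw [← heig k, Finset.sum_mul]
    congr 1; funext i; ring
  have e3 : (∑ i, ∑ l, wstar i * (A t i l * p l (w t l))) =
      ∑ i, p i (w t i) * ∑ k, A t k i * wstar k := by
    rw [Finset.sum_comm]
    congr 1; funext l
    rw [Finset.mul_sum]
    congr 1; funext i; ring
  have LHSsplit : ∑ i, p i (w t i) * ((w t i - wstar i) - ∑ k, A t k i * (w t k - wstar k)) =
      (∑ i, p i (w t i) * (w t i - ∑ k, A t k i * w t k)) - (∑ i, wstar i * p i (w t i)) +
        ∑ i, p i (w t i) * ∑ k, A t k i * wstar k := by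
    rw [← Finset.sum_sub_distrib, ← Finset.sum_add_distrib]
    apply Finset.sum_congr rfl
    intro i _
    have hk : ∑ k, A t k i * (w t k - wstar k) =
        (∑ k, A t k i * w t k) - ∑ k, A t k i * wstar k := by
      simp [mul_sub, Finset.sum_sub_distrib]
    rw [hk]; ring
  have hX : ∑ i, (p i (w t i) * (-(w t i) + ∑ k, A t k i * w t k) +
      wstar i * ((∑ k, Astar i k * p k (w t k)) - ∑ l, A t i l * p l (w t l))) =
      -(∑ i, p i (w t i) * (w t i - ∑ k, A t k i * w t k)) +
        ((∑ i, ∑ k, wstar i * (Astar i k * p k (w t k))) -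
          ∑ i, ∑ l, wstar i * (A t i l * p l (w t l))) := by
    rw [Finset.sum_add_distrib, e1, ← Finset.sum_neg_distrib]
    congr 1
    apply Finset.sum_congr rfl
    intro i _; ring
  rw [LHSsplit, hX, e2, e3]
  have : (∑ i, wstar i * p i (w t i)) = ∑ k, wstar k * p k (w t k) := rfl
  rw [this]
  ring
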